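/- arXiv:1503.08096 — 2 statements merged into one kernel-verified Lean document; each statement's English description precedes it below -/
import Mathlib

section
/- Let X_1, X_2, … be i.i.d. random variables with values in {1,…,r}, P(X_i = k) = p_k where 0 < p_k < 1 for all k and ∑_k p_k = 1. Let B_1 be the first position n such that some letter ℓ appears in h consecutive positions among X_1…X_n (the first completed h-run). Then E(B_1) = 1 / ∑_{i=1}^r [1/(p_i^{−1} + p_i^{−2} + ⋯ + p_i^{−h})]. -/
set_option linter.unusedSectionVars false

open MeasureTheory ProbabilityTheory
open scoped ENNReal

namespace RunAux

variable {Ω : Type*} [MeasurableSpace Ω]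

/-- set of n such that first n letters contain an h-run -/
def runW {r : ℕ} (X : ℕ → Ω → Fin r) (h : ℕ) (ω : Ω) : Set ℕ :=
  {n | ∃ ℓ : Fin r, ∃ m, m + h ≤ n ∧ ∀ k < h, X (m + k) ω = ℓ}

def Sset {r : ℕ} (X : ℕ → Ω → Fin r) (h n : ℕ) : Set Ω := {ω | n ∉ runW X h ω}

def Uset {r : ℕ} (X : ℕ → Ω → Fin r) (h : ℕ) : Set Ω := {ω | (runW X h ω).Nonempty}

noncomputable def tau {r : ℕ} (X : ℕ → Ω → Fin r) (h : ℕ) (ω : Ω) : ℕ := sInf (runW X h ω)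

def Tset {r : ℕ} (X : ℕ → Ω → Fin r) (h : ℕ) (j : Fin r) (m d : ℕ) : Set Ω :=
  {ω | tau X h ω = m + d + 1 ∧ ∀ k < d + 1, X (m + k) ω = j}

def Rset {r : ℕ} (X : ℕ → Ω → Fin r) (h : ℕ) (j : Fin r) : Set Ω :=
  {ω | ω ∈ Uset X h ∧ X (tau X h ω - 1) ω = j}

def Dset {r : ℕ} (X : ℕ → Ω → Fin r) (h : ℕ) (j : Fin r) (m d : ℕ) : Set Ω :=
  Sset X h (m + d) ∩ {ω | ∀ k < d, X (m + k) ω = j}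

/-- event determined by first n letters -/
def Det {r : ℕ} (X : ℕ → Ω → Fin r) (n : ℕ) (E : Set Ω) : Prop :=
  ∃ A : Set (Fin n → Fin r), E = (fun ω (i : Fin n) => X i ω) ⁻¹' A

variable {r h : ℕ} {X : ℕ → Ω → Fin r}

lemma runW_upward {ω : Ω} {a b : ℕ} (ha : a ∈ runW X h ω) (hab : a ≤ b) : b ∈ runW X h ω := by
  obtain ⟨ℓ, m, hm, hk⟩ := ha; exact ⟨ℓ, m, hm.trans hab, hk⟩

lemma runW_ge {ω : Ω} {n : ℕ} (hn : n ∈ runW X h ω) : h ≤ n := by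
  obtain ⟨ℓ, m, hm, -⟩ := hn; omega

lemma tau_mem {ω : Ω} (hU : ω ∈ Uset X h) : tau X h ω ∈ runW X h ω := Nat.sInf_mem hU

lemma mem_Sset_iff_lt_tau {ω : Ω} (hU : ω ∈ Uset X h) (n : ℕ) :
    ω ∈ Sset X h n ↔ n < tau X h ω := by
  constructor
  · intro hn
    by_contra hle
    exact hn (runW_upward (tau_mem hU) (by omega))
  · intro hlt hn
    have h2 : tau X h ω ≤ n := Nat.sInf_le hn
    omega

lemma tau_run (hh : 1 ≤ h) {ω : Ω} (hU : ω ∈ Uset X h) :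
    ∀ i < h, X (tau X h ω - 1 - i) ω = X (tau X h ω - 1) ω := by
  obtain ⟨ℓ, m, hm, hk⟩ := tau_mem (X := X) (h := h) hU
  have htau : h ≤ tau X h ω := runW_ge ⟨ℓ, m, hm, hk⟩
  have hmeq : m + h = tau X h ω := by
    rcases Nat.lt_or_ge (m + h) (tau X h ω) with hlt | hge
    · exfalso
      have : tau X h ω - 1 ∈ runW X h ω := ⟨ℓ, m, by omega, hk⟩
      have h3 : tau X h ω ≤ tau X h ω - 1 := Nat.sInf_le this
      omega
    · omega
  intro i hi
  have h1 : tau X h ω - 1 - i = m + (h - 1 - i) := by omega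
  have h2 : tau X h ω - 1 = m + (h - 1) := by omega
  rw [h1, h2, hk _ (by omega), hk _ (by omega)]

lemma det_measurable (hmeas : ∀ n, Measurable (X n)) {n : ℕ} {E : Set Ω}
    (hE : Det X n E) : MeasurableSet E := by
  obtain ⟨A, rfl⟩ := hE
  exact measurableSet_preimage (measurable_pi_lambda _ (fun i => hmeas i))
    ((Set.toFinite A).measurableSet)

lemma det_mono {m n : ℕ} (hmn : m ≤ n) {E : Set Ω} (hE : Det X m E) : Det X n E := by
  obtain ⟨A, rfl⟩ := hE
  refine ⟨(fun v : Fin n → Fin r => fun i : Fin m => v (Fin.castLE hmn i)) ⁻¹' A, ?_⟩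
  rfl

lemma det_inter {n : ℕ} {E F : Set Ω} (hE : Det X n E) (hF : Det X n F) :
    Det X n (E ∩ F) := by
  obtain ⟨A, rfl⟩ := hE; obtain ⟨B, rfl⟩ := hF
  exact ⟨A ∩ B, rfl⟩

lemma det_X {i n : ℕ} (hin : i < n) (j : Fin r) : Det X n {ω | X i ω = j} := by
  refine ⟨{v | v ⟨i, hin⟩ = j}, rfl⟩

lemma det_S (n : ℕ) : Det X n (Sset X h n) := by
  refine ⟨{v | ¬ ∃ ℓ : Fin r, ∃ m, ∃ hm : m + h ≤ n, ∀ k, ∀ hk : k < h, v ⟨m + k, by omega⟩ = ℓ}, ?_⟩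
  ext ω
  simp only [Sset, runW, Set.mem_setOf_eq, Set.mem_preimage]
  constructor
  · intro hn ⟨ℓ, m, hm, hk⟩; exact hn ⟨ℓ, m, hm, fun k hk' => hk k hk'⟩
  · intro hn ⟨ℓ, m, hm, hk⟩; exact hn ⟨ℓ, m, hm, fun k hk' => hk k hk'⟩


lemma det_compl {n : ℕ} {E : Set Ω} (hE : Det X n E) : Det X n Eᶜ := by
  obtain ⟨A, rfl⟩ := hE; exact ⟨Aᶜ, rfl⟩

lemma det_block {m d n : ℕ} (hd : m + d ≤ n) (j : Fin r) :
    Det X n {ω | ∀ k < d, X (m + k) ω = j} := by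
  induction d with
  | zero => exact ⟨Set.univ, by ext ω; simp⟩
  | succ d ih =>
    have h1 : {ω | ∀ k < d + 1, X (m + k) ω = j}
        = {ω | ∀ k < d, X (m + k) ω = j} ∩ {ω | X (m + d) ω = j} := by
      ext ω
      simp only [Set.mem_inter_iff, Set.mem_setOf_eq]
      constructor
      · intro hk; exact ⟨fun k hk' => hk k (by omega), hk d (by omega)⟩
      · rintro ⟨h1, h2⟩ k hk
        rcases Nat.lt_or_ge k d with h | h
        · exact h1 k h
        · have : k = d := by omega
          rwa [this]
    rw [h1]
    exact det_inter (ih (by omega)) (det_X (by omega) j)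

lemma det_T (hh : 1 ≤ h) (j : Fin r) (m d : ℕ) : Det X (m + d + 1) (Tset X h j m d) := by
  have h1 : Tset X h j m d
      = (Sset X h (m + d) ∩ (Sset X h (m + d + 1))ᶜ) ∩ {ω | ∀ k < d + 1, X (m + k) ω = j} := by
    ext ω
    simp only [Tset, Sset, Set.mem_inter_iff, Set.mem_setOf_eq, Set.mem_compl_iff, not_not]
    constructor
    · rintro ⟨ht, hk⟩
      refine ⟨⟨?_, ?_⟩, hk⟩
      · intro hmem
        have h2 : tau X h ω ≤ m + d := Nat.sInf_le hmem
        omega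
      · have : (runW X h ω).Nonempty := by
          by_contra hne
          rw [Set.not_nonempty_iff_eq_empty] at hne
          simp only [tau, hne, Nat.sInf_empty] at ht
          omega
        have := tau_mem (X := X) (h := h) this
        rwa [ht] at this
    · rintro ⟨⟨h1, h2⟩, hk⟩
      refine ⟨?_, hk⟩
      have hle : tau X h ω ≤ m + d + 1 := Nat.sInf_le h2
      have hmem := tau_mem (X := X) (h := h) ⟨_, h2⟩
      rcases Nat.lt_or_ge (tau X h ω) (m + d + 1) with hlt | hge
      · exact absurd (runW_upward hmem (by omega)) h1
      · omega
  rw [h1]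
  refine det_inter (det_inter (det_mono (by omega) (det_S _))
    (det_compl (det_S _))) ?_
  exact det_block (by omega) j

lemma key_indep {μ : Measure Ω} (hindep : iIndepFun X μ)
    (hmeas : ∀ n, Measurable (X n)) {n : ℕ} {E : Set Ω} (hE : Det X n E) (j : Fin r) :
    μ (E ∩ {ω | X n ω = j}) = μ E * μ {ω | X n ω = j} := by
  obtain ⟨A, rfl⟩ := hE
  have hdisj : Disjoint (Finset.range n) ({n} : Finset ℕ) := by
    simp only [Finset.disjoint_left, Finset.mem_range, Finset.mem_singleton]
    omega
  have hIF := hindep.indepFun_finset (Finset.range n) {n} hdisj hmeas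
  have hφ : Measurable (fun v : (↥(Finset.range n) → Fin r) => fun i : Fin n =>
      v ⟨(i : ℕ), Finset.mem_range.2 i.2⟩) :=
    measurable_pi_lambda _ (fun i => measurable_pi_apply _)
  have hψ : Measurable (fun v : (↥({n} : Finset ℕ) → Fin r) =>
      v ⟨n, Finset.mem_singleton_self n⟩) := measurable_pi_apply _
  have hIF2 := hIF.comp hφ hψ
  have := hIF2.measure_inter_preimage_eq_mul A {j}
    ((Set.toFinite A).measurableSet) ((Set.toFinite ({j} : Set (Fin r))).measurableSet)
  exact this

lemma block_succ (j : Fin r) (m d : ℕ) :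
    {ω : Ω | ∀ k < d + 1, X (m + k) ω = j}
      = {ω | ∀ k < d, X (m + k) ω = j} ∩ {ω | X (m + d) ω = j} := by
  ext ω
  simp only [Set.mem_inter_iff, Set.mem_setOf_eq]
  constructor
  · intro hk; exact ⟨fun k hk' => hk k (by omega), hk d (by omega)⟩
  · rintro ⟨h1, h2⟩ k hk
    rcases Nat.lt_or_ge k d with hlt | hge
    · exact h1 k hlt
    · have : k = d := by omega
      rwa [this]

lemma Dset_split (j : Fin r) (m d : ℕ) :
    Dset X h j m d ∩ {ω | X (m + d) ω = j}
      = Dset X h j m (d + 1) ∪ Tset X h j m d := by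
  ext ω
  simp only [Dset, Tset, Sset, Set.mem_inter_iff, Set.mem_setOf_eq, Set.mem_union,
    Nat.add_assoc]
  constructor
  · rintro ⟨⟨hS, hblk⟩, hd⟩
    have hblk1 : ∀ k < d + 1, X (m + k) ω = j := by
      intro k hk
      rcases Nat.lt_or_ge k d with hlt | hge
      · exact hblk k hlt
      · have : k = d := by omega
        rwa [this]
    by_cases hW : m + (d + 1) ∈ runW X h ω
    · right
      refine ⟨?_, hblk1⟩
      have hle : tau X h ω ≤ m + (d + 1) := Nat.sInf_le hW
      have hmem := tau_mem (X := X) (h := h) ⟨_, hW⟩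
      rcases Nat.lt_or_ge (tau X h ω) (m + (d + 1)) with hlt | hge
      · exact absurd (runW_upward hmem (by omega)) hS
      · omega
    · exact Or.inl ⟨hW, hblk1⟩
  · rintro (⟨hS, hblk⟩ | ⟨ht, hblk⟩)
    · refine ⟨⟨fun hW => hS (runW_upward hW (by omega)), fun k hk => hblk k (by omega)⟩,
        hblk d (by omega)⟩
    · refine ⟨⟨fun hW => ?_, fun k hk => hblk k (by omega)⟩, hblk d (by omega)⟩
      have : tau X h ω ≤ m + d := Nat.sInf_le hW
      omega

lemma Dset_Tset_disjoint (j : Fin r) (m d : ℕ) :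
    Disjoint (Dset X h j m (d + 1)) (Tset X h j m d) := by
  rw [Set.disjoint_left]
  rintro ω ⟨hS, -⟩ ⟨ht, -⟩
  have hne : (runW X h ω).Nonempty := by
    by_contra hne
    rw [Set.not_nonempty_iff_eq_empty] at hne
    simp only [tau, hne, Nat.sInf_empty] at ht
    omega
  have hmem := tau_mem (X := X) (h := h) hne
  rw [ht] at hmem
  exact hS (by simpa [Nat.add_assoc] using hmem)

lemma det_D (j : Fin r) (m d : ℕ) : Det X (m + d) (Dset X h j m d) :=
  det_inter (det_S _) (det_block le_rfl j)

lemma Dset_zero (j : Fin r) (m : ℕ) : Dset X h j m 0 = Sset X h m := by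
  ext ω; simp [Dset, Sset]

lemma Dset_top (j : Fin r) (m : ℕ) : Dset X h j m h = ∅ := by
  ext ω
  simp only [Dset, Sset, Set.mem_inter_iff, Set.mem_setOf_eq, Set.mem_empty_iff_false,
    iff_false, not_and]
  intro hS hblk
  exact hS ⟨j, m, le_rfl, hblk⟩

section Meas

variable {μ : Measure Ω} [IsProbabilityMeasure μ]
  (hindep : iIndepFun X μ)
  (hmeas : ∀ n, Measurable (X n))

include hindep hmeas in
lemma step_measure (hh : 1 ≤ h) (j : Fin r) (m d : ℕ) :
    μ (Dset X h j m d) * μ {ω | X (m + d) ω = j}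
      = μ (Dset X h j m (d + 1)) + μ (Tset X h j m d) := by
  rw [← key_indep hindep hmeas (det_D j m d) j, Dset_split, measure_union
    (Dset_Tset_disjoint j m d) (det_measurable hmeas (det_T hh j m d))]

include hindep hmeas in
lemma telescope (hh : 1 ≤ h) (j : Fin r) (m : ℕ) {q : ℝ≥0∞}
    (hq : ∀ n, μ {ω | X n ω = j} = q) (hq0 : q ≠ 0) (hqt : q ≠ ⊤) :
    μ (Sset X h m) = ∑ d ∈ Finset.range h, q⁻¹ ^ (d + 1) * μ (Tset X h j m d) := by
  have key : ∀ e, e ≤ h → μ (Sset X h m)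
      = q⁻¹ ^ e * μ (Dset X h j m e)
        + ∑ d ∈ Finset.range e, q⁻¹ ^ (d + 1) * μ (Tset X h j m d) := by
    intro e he
    induction e with
    | zero => simp [Dset_zero]
    | succ e ih =>
      rw [ih (by omega), Finset.sum_range_succ]
      have hD : μ (Dset X h j m e) = q⁻¹ * (μ (Dset X h j m (e + 1)) + μ (Tset X h j m e)) := by
        rw [← step_measure hindep hmeas hh j m e, hq, mul_comm (μ (Dset X h j m e)) q,
          ← mul_assoc, ENNReal.inv_mul_cancel hq0 hqt, one_mul]
      rw [hD]
      ring
  have := key h le_rfl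
  rw [Dset_top] at this
  simpa using this

lemma T_pairwise_disjoint (j : Fin r) (d : ℕ) :
    Pairwise (Function.onFun Disjoint fun m => Tset X h j m d) := by
  intro m m' hmm'
  rw [Function.onFun, Set.disjoint_left]
  rintro ω ⟨h1, -⟩ ⟨h2, -⟩
  rw [h1] at h2
  omega

lemma iUnion_T (hh : 1 ≤ h) (j : Fin r) {d : ℕ} (hd : d < h) :
    (⋃ m, Tset X h j m d) = Rset X h j := by
  ext ω
  simp only [Set.mem_iUnion, Tset, Rset, Uset, Set.mem_setOf_eq]
  constructor
  · rintro ⟨m, ht, hblk⟩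
    have hne : (runW X h ω).Nonempty := by
      by_contra hne
      rw [Set.not_nonempty_iff_eq_empty] at hne
      simp only [tau, hne, Nat.sInf_empty] at ht
      omega
    refine ⟨hne, ?_⟩
    have : tau X h ω - 1 = m + d := by omega
    rw [this]
    exact hblk d (by omega)
  · rintro ⟨hne, hj⟩
    have hge : h ≤ tau X h ω := runW_ge (tau_mem (X := X) (h := h) hne)
    refine ⟨tau X h ω - (d + 1), by omega, ?_⟩
    intro k hk
    have h1 : tau X h ω - (d + 1) + k = tau X h ω - 1 - (d - k) := by omega
    rw [h1, tau_run hh hne (d - k) (by omega), hj]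

include hmeas in
lemma Rset_measurable (hh : 1 ≤ h) (j : Fin r) : MeasurableSet (Rset X h j) := by
  rw [← iUnion_T hh j (d := h - 1) (by omega)]
  exact MeasurableSet.iUnion fun m => det_measurable hmeas (det_T hh j m (h - 1))

include hindep hmeas in
lemma sum_S (hh : 1 ≤ h) (j : Fin r) {q : ℝ≥0∞}
    (hq : ∀ n, μ {ω | X n ω = j} = q) (hq0 : q ≠ 0) (hqt : q ≠ ⊤) :
    ∑' m, μ (Sset X h m)
      = (∑ d ∈ Finset.range h, q⁻¹ ^ (d + 1)) * μ (Rset X h j) := by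
  calc ∑' m, μ (Sset X h m)
      = ∑' m, ∑ d ∈ Finset.range h, q⁻¹ ^ (d + 1) * μ (Tset X h j m d) := by
        exact tsum_congr fun m => telescope hindep hmeas hh j m hq hq0 hqt
    _ = ∑ d ∈ Finset.range h, ∑' m, q⁻¹ ^ (d + 1) * μ (Tset X h j m d) := by
        exact (Summable.tsum_finsetSum fun d _ => ENNReal.summable)
    _ = ∑ d ∈ Finset.range h, q⁻¹ ^ (d + 1) * ∑' m, μ (Tset X h j m d) := by
        refine Finset.sum_congr rfl fun d _ => ?_
        exact ENNReal.tsum_mul_left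
    _ = ∑ d ∈ Finset.range h, q⁻¹ ^ (d + 1) * μ (Rset X h j) := by
        refine Finset.sum_congr rfl fun d hd => ?_
        rw [← measure_iUnion (T_pairwise_disjoint j d)
          (fun m => det_measurable hmeas (det_T hh j m d)),
          iUnion_T hh j (Finset.mem_range.1 hd)]
    _ = (∑ d ∈ Finset.range h, q⁻¹ ^ (d + 1)) * μ (Rset X h j) := by
        rw [Finset.sum_mul]

lemma R_pairwise_disjoint : Pairwise (Function.onFun Disjoint fun j => Rset X h j) := by
  intro j j' hjj'
  rw [Function.onFun, Set.disjoint_left]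
  rintro ω ⟨-, h1⟩ ⟨-, h2⟩
  rw [h1] at h2
  exact hjj' h2

lemma iUnion_R : (⋃ j, Rset X h j) = Uset X h := by
  ext ω
  simp only [Set.mem_iUnion, Rset, Set.mem_setOf_eq]
  constructor
  · rintro ⟨j, hU, -⟩; exact hU
  · intro hU; exact ⟨_, hU, rfl⟩

include hindep hmeas in
lemma block_measure (j : Fin r) {q : ℝ≥0∞} (hq : ∀ n, μ {ω | X n ω = j} = q) (n : ℕ) :
    ∀ d, μ (Sset X h n ∩ {ω | ∀ k < d, X (n + k) ω = j}) = μ (Sset X h n) * q ^ d := by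
  intro d
  induction d with
  | zero =>
    have : {ω : Ω | ∀ k < 0, X (n + k) ω = j} = Set.univ := by
      ext ω; simp
    simp [this]
  | succ d ih =>
    have hsplit : Sset X h n ∩ {ω | ∀ k < d + 1, X (n + k) ω = j}
        = (Sset X h n ∩ {ω | ∀ k < d, X (n + k) ω = j}) ∩ {ω | X (n + d) ω = j} := by
      rw [block_succ, Set.inter_assoc]
    rw [hsplit, key_indep hindep hmeas
      (det_inter (det_mono (Nat.le_add_right n d) (det_S n)) (det_block le_rfl j)) j,
      ih, hq, pow_succ, mul_assoc]

include hindep hmeas in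
lemma S_decay (j : Fin r) {q : ℝ≥0∞} (hq : ∀ n, μ {ω | X n ω = j} = q) (hq1 : q ≤ 1) (n : ℕ) :
    μ (Sset X h (n + h)) ≤ μ (Sset X h n) * (1 - q ^ h) := by
  set B : Set Ω := {ω | ∀ k < h, X (n + k) ω = j} with hB
  have hsub : Sset X h (n + h) ⊆ Sset X h n \ (Sset X h n ∩ B) := by
    intro ω hω
    have hnW : n + h ∉ runW X h ω := hω
    refine ⟨fun hW => hnW (runW_upward hW (Nat.le_add_right n h)), ?_⟩
    rintro ⟨-, hblk⟩
    exact hnW ⟨j, n, le_rfl, hblk⟩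
  have hmB : MeasurableSet (Sset X h n ∩ B) :=
    det_measurable hmeas (det_inter (det_mono (Nat.le_add_right n h) (det_S n))
      (det_block le_rfl j))
  have h1 : μ (Sset X h (n + h)) ≤ μ (Sset X h n) - μ (Sset X h n ∩ B) := by
    refine (measure_mono hsub).trans ?_
    rw [measure_diff Set.inter_subset_left hmB.nullMeasurableSet (measure_ne_top μ _)]
  rw [block_measure hindep hmeas j hq n h] at h1
  refine h1.trans ?_
  rw [tsub_le_iff_right]
  have hqh : q ^ h ≤ 1 := pow_le_one' hq1 h
  calc μ (Sset X h n) = μ (Sset X h n) * ((1 - q ^ h) + q ^ h) := by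
        rw [tsub_add_cancel_of_le hqh, mul_one]
    _ = μ (Sset X h n) * (1 - q ^ h) + μ (Sset X h n) * q ^ h := by rw [mul_add]
    _ ≤ μ (Sset X h n) * (1 - q ^ h) + μ (Sset X h n) * q ^ h := le_rfl

include hindep hmeas in
lemma U_compl_null (j : Fin r) {q : ℝ≥0∞} (hq : ∀ n, μ {ω | X n ω = j} = q)
    (hq0 : q ≠ 0) (hq1 : q ≤ 1) :
    μ (Uset X h)ᶜ = 0 := by
  set β : ℝ≥0∞ := 1 - q ^ h with hβ
  have hβlt : β < 1 := by
    refine ENNReal.sub_lt_self ENNReal.one_ne_top one_ne_zero ?_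
    exact pow_ne_zero h hq0
  have hgeom : ∀ k, μ (Sset X h (k * h)) ≤ β ^ k := by
    intro k
    induction k with
    | zero => simpa using prob_le_one
    | succ k ih =>
      have : (k + 1) * h = k * h + h := by ring
      rw [this, pow_succ]
      exact (S_decay hindep hmeas j hq hq1 (k * h)).trans (mul_le_mul_left ih β)
  have hsub : ∀ k, (Uset X h)ᶜ ⊆ Sset X h (k * h) := by
    intro k ω hω
    intro hW
    exact hω ⟨_, hW⟩
  have hle : ∀ k, μ (Uset X h)ᶜ ≤ β ^ k := fun k => (measure_mono (hsub k)).trans (hgeom k)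
  have htend := ENNReal.tendsto_pow_atTop_nhds_zero_of_lt_one hβlt
  have := ge_of_tendsto' htend hle
  simpa using this

end Meas

end RunAux

lemma sum_Icc_one_shift {M : Type*} [AddCommMonoid M] (f : ℕ → M) :
    ∀ h : ℕ, ∑ k ∈ Finset.Icc 1 h, f k = ∑ d ∈ Finset.range h, f (d + 1) := by
  intro h
  induction h with
  | zero => simp
  | succ h ih => rw [Finset.sum_Icc_succ_top (by omega), ih, Finset.sum_range_succ]

open RunAux in
/-- Expected waiting time for the first completed `h`-run of any letter. -/
theorem expectation_first_h_run {Ω : Type*} [MeasurableSpace Ω]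
    (μ : Measure Ω) [IsProbabilityMeasure μ]
    (r h : ℕ) (hr : 1 ≤ r) (hh : 1 ≤ h)
    (p : Fin r → ℝ) (hp : ∀ i, 0 < p i ∧ p i < 1) (hpsum : ∑ i, p i = 1)
    (X : ℕ → Ω → Fin r) (hmeas : ∀ n, Measurable (X n))
    (hindep : iIndepFun X μ)
    (hdist : ∀ n k, μ {ω | X n ω = k} = ENNReal.ofReal (p k))
    (B₁ : Ω → ℕ)
    (hB : ∀ ω, B₁ ω
        = sInf {n | ∃ ℓ : Fin r, ∃ m, m + h ≤ n ∧ ∀ k < h, X (m + k) ω = ℓ}) :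
    ∫⁻ ω, (B₁ ω : ℝ≥0∞) ∂μ
      = ENNReal.ofReal
          (1 / ∑ i, 1 / ∑ k ∈ Finset.Icc 1 h, (1 / p i) ^ k) := by
  classical
  have hne : Nonempty (Fin r) := ⟨⟨0, hr⟩⟩
  set q : Fin r → ℝ≥0∞ := fun j => ENNReal.ofReal (p j) with hqdef
  have hq : ∀ (j : Fin r) (n : ℕ), μ {ω | X n ω = j} = q j := fun j n => hdist n j
  have hq0 : ∀ j, q j ≠ 0 := fun j => (ENNReal.ofReal_pos.2 (hp j).1).ne'
  have hqt : ∀ j, q j ≠ ⊤ := fun _ => ENNReal.ofReal_ne_top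
  have hq1 : ∀ j, q j ≤ 1 := fun j => ENNReal.ofReal_le_one.2 (hp j).2.le
  set c : Fin r → ℝ≥0∞ := fun j => ∑ d ∈ Finset.range h, (q j)⁻¹ ^ (d + 1) with hcdef
  have hc0 : ∀ j, c j ≠ 0 := by
    intro j
    have hterm : (0:ℝ≥0∞) < (q j)⁻¹ ^ (0 + 1) :=
      ENNReal.pow_pos (ENNReal.inv_pos.2 (hqt j)) _
    refine (lt_of_lt_of_le hterm ?_).ne'
    exact Finset.single_le_sum (f := fun d => (q j)⁻¹ ^ (d + 1))
      (fun d _ => zero_le) (Finset.mem_range.2 (by omega))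
  have hct : ∀ j, c j ≠ ⊤ := by
    intro j
    refine (ENNReal.sum_lt_top.2 fun d _ => ?_).ne
    exact ENNReal.pow_lt_top (ENNReal.inv_lt_top.2 (zero_lt_iff.2 (hq0 j)))
  set A : ℝ≥0∞ := ∑' m, μ (Sset X h m) with hAdef
  have hA : ∀ j, A = c j * μ (Rset X h j) :=
    fun j => sum_S hindep hmeas hh j (hq j) (hq0 j) (hqt j)
  set j₀ : Fin r := ⟨0, hr⟩ with hj₀
  have hU0 : μ (Uset X h)ᶜ = 0 := U_compl_null hindep hmeas j₀ (hq j₀) (hq0 j₀) (hq1 j₀)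
  have hmU : MeasurableSet (Uset X h) := by
    rw [← iUnion_R]
    exact MeasurableSet.iUnion fun j => Rset_measurable hmeas hh j
  -- LHS = A
  have htau : ∀ ω, B₁ ω = tau X h ω := hB
  have hpt : ∀ ω, (B₁ ω : ℝ≥0∞)
      = ∑' n, Set.indicator (Sset X h n ∩ Uset X h) (fun _ => (1:ℝ≥0∞)) ω := by
    intro ω
    by_cases hU : ω ∈ Uset X h
    · have hval : ∀ n, Set.indicator (Sset X h n ∩ Uset X h) (fun _ => (1:ℝ≥0∞)) ω
          = if n < tau X h ω then 1 else 0 := by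
        intro n
        by_cases hn : n < tau X h ω
        · rw [Set.indicator_of_mem (Set.mem_inter ((mem_Sset_iff_lt_tau hU n).2 hn) hU), if_pos hn]
        · rw [Set.indicator_of_notMem, if_neg hn]
          rintro ⟨hS, -⟩
          exact hn ((mem_Sset_iff_lt_tau hU n).1 hS)
      rw [htau ω]
      calc (tau X h ω : ℝ≥0∞) = ∑ n ∈ Finset.range (tau X h ω), 1 := by simp
        _ = ∑' n, (if n < tau X h ω then (1:ℝ≥0∞) else 0) := by
            rw [tsum_eq_sum (s := Finset.range (tau X h ω))
              (fun n hn => if_neg (fun hlt => hn (Finset.mem_range.2 hlt)))]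
            exact Finset.sum_congr rfl fun n hn => (if_pos (Finset.mem_range.1 hn)).symm
        _ = ∑' n, Set.indicator (Sset X h n ∩ Uset X h) (fun _ => (1:ℝ≥0∞)) ω :=
            tsum_congr fun n => (hval n).symm
    · have hWempty : runW X h ω = ∅ := Set.not_nonempty_iff_eq_empty.1 hU
      have hB0 : B₁ ω = 0 := by rw [htau ω]; simp [tau, hWempty]
      have hind : ∀ n, Set.indicator (Sset X h n ∩ Uset X h) (fun _ => (1:ℝ≥0∞)) ω = 0 := by
        intro n
        exact Set.indicator_of_notMem (fun hmem => hU hmem.2) _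
      rw [hB0]
      simp [hind]
  have hmSU : ∀ n, MeasurableSet (Sset X h n ∩ Uset X h) :=
    fun n => (det_measurable hmeas (det_S n)).inter hmU
  have hLHS : ∫⁻ ω, (B₁ ω : ℝ≥0∞) ∂μ = A := by
    calc ∫⁻ ω, (B₁ ω : ℝ≥0∞) ∂μ
        = ∫⁻ ω, ∑' n, Set.indicator (Sset X h n ∩ Uset X h) (fun _ => (1:ℝ≥0∞)) ω ∂μ := by
          exact lintegral_congr hpt
      _ = ∑' n, ∫⁻ ω, Set.indicator (Sset X h n ∩ Uset X h) (fun _ => (1:ℝ≥0∞)) ω ∂μ := by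
          exact lintegral_tsum fun n => (measurable_one.indicator (hmSU n)).aemeasurable
      _ = ∑' n, μ (Sset X h n ∩ Uset X h) := by
          exact tsum_congr fun n => lintegral_indicator_one (hmSU n)
      _ = A := tsum_congr fun n => measure_inter_conull hU0
  -- sum of R-measures is 1
  have hμU : μ (Uset X h) = 1 := by
    have h1 := measure_add_measure_compl (μ := μ) hmU
    rw [hU0, add_zero, measure_univ] at h1
    exact h1
  have hRsum : ∑ j, μ (Rset X h j) = 1 := by
    rw [← tsum_fintype (L := SummationFilter.unconditional _), ← measure_iUnion R_pairwise_disjoint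
      (fun j => Rset_measurable hmeas hh j), iUnion_R, hμU]
  -- algebra
  have hR : ∀ j, μ (Rset X h j) = (c j)⁻¹ * A := by
    intro j
    rw [hA j, ← mul_assoc, ENNReal.inv_mul_cancel (hc0 j) (hct j), one_mul]
  set s : ℝ≥0∞ := ∑ j, (c j)⁻¹ with hsdef
  have hsA : s * A = 1 := by
    rw [hsdef, Finset.sum_mul]
    rw [← hRsum]
    exact Finset.sum_congr rfl fun j _ => (hR j).symm
  have hs0 : s ≠ 0 := by
    have : (c j₀)⁻¹ ≠ 0 := ENNReal.inv_ne_zero.2 (hct j₀)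
    refine fun hs => this ?_
    exact le_antisymm (hs ▸ Finset.single_le_sum (f := fun j => (c j)⁻¹)
      (fun j _ => zero_le) (Finset.mem_univ j₀)) zero_le
  have hst : s ≠ ⊤ := by
    refine (ENNReal.sum_lt_top.2 fun j _ => ?_).ne
    exact ENNReal.inv_lt_top.2 (zero_lt_iff.2 (hc0 j))
  have hAs : A = s⁻¹ := by
    calc A = 1 * A := (one_mul A).symm
      _ = (s⁻¹ * s) * A := by rw [ENNReal.inv_mul_cancel hs0 hst]
      _ = s⁻¹ * (s * A) := by rw [mul_assoc]
      _ = s⁻¹ := by rw [hsA, mul_one]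
  -- RHS identification
  have hcRpos : ∀ i : Fin r, 0 < ∑ k ∈ Finset.Icc 1 h, (1 / p i) ^ k := by
    intro i
    refine Finset.sum_pos (fun k _ => pow_pos (one_div_pos.2 (hp i).1) k) ?_
    exact Finset.nonempty_Icc.2 hh
  have hofc : ∀ i : Fin r, ENNReal.ofReal (∑ k ∈ Finset.Icc 1 h, (1 / p i) ^ k) = c i := by
    intro i
    rw [ENNReal.ofReal_sum_of_nonneg
      (fun k _ => pow_nonneg (one_div_pos.2 (hp i).1).le k)]
    have hterm : ∀ k, ENNReal.ofReal ((1 / p i) ^ k) = (q i)⁻¹ ^ k := by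
      intro k
      rw [ENNReal.ofReal_pow (one_div_pos.2 (hp i).1).le, one_div,
        ENNReal.ofReal_inv_of_pos (hp i).1]
    simp_rw [hterm]
    exact sum_Icc_one_shift _ h
  have hRHS : ENNReal.ofReal (1 / ∑ i, 1 / ∑ k ∈ Finset.Icc 1 h, (1 / p i) ^ k) = s⁻¹ := by
    have hSpos : 0 < ∑ i, 1 / ∑ k ∈ Finset.Icc 1 h, (1 / p i) ^ k := by
      refine Finset.sum_pos (fun i _ => one_div_pos.2 (hcRpos i)) Finset.univ_nonempty
    rw [one_div, ENNReal.ofReal_inv_of_pos hSpos,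
      ENNReal.ofReal_sum_of_nonneg (fun i _ => (one_div_pos.2 (hcRpos i)).le)]
    congr 1
    refine Finset.sum_congr rfl fun i _ => ?_
    rw [one_div, ENNReal.ofReal_inv_of_pos (hcRpos i), hofc]
  rw [hLHS, hAs, hRHS]
end

section
/- The number of words of length n over an r-letter alphabet containing no h-run (no h consecutive equal letters) has ordinary generating function 1/(1 − ∑_{i=1}^r (z − z^h)/(1 − z^h)) = (1 − z^h)/(1 − rz + (r−1)z^h) when each letter is given weight z. -/
open PowerSeries


open List

variable {α : Type*}

lemma infix_append_split {l u v : List α} (h : l <:+: u ++ v) :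
    l <:+: u ∨ l <:+: v ∨
      ∃ l₁ l₂, l = l₁ ++ l₂ ∧ l₁ ≠ [] ∧ l₂ ≠ [] ∧ l₁ <:+ u ∧ l₂ <+: v := by
  obtain ⟨p, s, hps⟩ := h
  rw [List.append_assoc] at hps
  rcases List.append_eq_append_iff.mp hps with ⟨a', hu, hls⟩ | ⟨c', hp, hv⟩
  · rcases List.append_eq_append_iff.mp hls with ⟨b', ha', hs⟩ | ⟨d', hl, hv'⟩
    · left
      exact ⟨p, b', by rw [hu, ha', List.append_assoc]⟩
    · rcases eq_or_ne a' [] with rfl | ha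
      · right; left
        exact ⟨[], s, by simpa [hl] using hv'.symm⟩
      · rcases eq_or_ne d' [] with rfl | hd
        · left
          refine ⟨p, [], ?_⟩
          simp only [append_nil] at hl ⊢
          rw [hu, hl]
        · right; right
          exact ⟨a', d', hl, ha, hd, ⟨p, hu.symm⟩, ⟨s, hv'.symm⟩⟩
  · right; left
    exact ⟨c', s, by rw [hv]; simp⟩

lemma key_no_run {h : ℕ} (k : ℕ) (hk : k < h) (a : α) (t : List α)
    (ht : ∀ b, ¬ List.replicate h b <:+: t)
    (hhead : ∀ b ∈ t.head?, b ≠ a) :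
    ∀ b, ¬ List.replicate h b <:+: (List.replicate k a ++ t) := by
  intro b hb
  rcases infix_append_split hb with h1 | h2 | ⟨l₁, l₂, heq, h1ne, h2ne, hsuf, hpre⟩
  · obtain ⟨n, hn, hrep⟩ := List.sublist_replicate_iff.mp h1.sublist
    have := congrArg List.length hrep
    simp only [List.length_replicate] at this
    omega
  · exact ht b h2
  · obtain ⟨x, hx⟩ := List.exists_mem_of_ne_nil l₁ h1ne
    have hxb : x = b := by
      have : x ∈ List.replicate h b := heq ▸ List.mem_append_left _ hx
      exact List.eq_of_mem_replicate this
    have hxa : x = a := List.eq_of_mem_replicate (hsuf.sublist.subset hx)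
    obtain ⟨y, l₂', rfl⟩ := List.exists_cons_of_ne_nil h2ne
    have hyb : y = b := by
      have : y ∈ List.replicate h b := heq ▸ List.mem_append_right _ List.mem_cons_self
      exact List.eq_of_mem_replicate this
    obtain ⟨t', rfl⟩ := hpre
    have := hhead y (by simp)
    exact this (by rw [hyb, ← hxb, hxa])

/-! ### Counting -/

section Count

variable (r h : ℕ)

abbrev NoRunWords (n : ℕ) : Type :=
  {w : List (Fin r) // w.length = n ∧ ∀ a, ¬ List.replicate h a <:+: w}

abbrev TailWords (n : ℕ) : Type :=
  {w : List (Fin r) // w.length = n ∧ ∀ b, ¬ List.replicate h b <:+: w.tail}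

abbrev BadWords (n : ℕ) : Type :=
  {w : List (Fin r) // w.length = n ∧ (∀ b, ¬ List.replicate h b <:+: w.tail)
      ∧ ¬ ∀ a, ¬ List.replicate h a <:+: w}

def wordsEquiv (p : List (Fin r) → Prop) (n : ℕ) :
    {w : List (Fin r) // w.length = n ∧ p w} ≃ {v : List.Vector (Fin r) n // p v.1} where
  toFun w := ⟨⟨w.1, w.2.1⟩, w.2.2⟩
  invFun v := ⟨v.1.1, v.1.2, v.2⟩
  left_inv _ := rfl
  right_inv _ := rfl

noncomputable instance (p : List (Fin r) → Prop) (n : ℕ) :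
    Fintype {w : List (Fin r) // w.length = n ∧ p w} := by
  classical
  exact Fintype.ofEquiv _ (wordsEquiv r p n).symm

variable {h}

lemma cardS0 (hh : 2 ≤ h) : Nat.card (NoRunWords r h 0) = 1 := by
  have : Unique (NoRunWords r h 0) := by
    refine ⟨⟨⟨[], rfl, fun a hinf => ?_⟩⟩, fun w => ?_⟩
    · have h2 := hh
      have := hinf.sublist.length_le
      simp at this; omega
    · apply Subtype.ext
      simpa using List.length_eq_zero_iff.mp w.2.1
  exact Nat.card_unique

lemma cardS_zero_alphabet (n : ℕ) (hn : 1 ≤ n) : Nat.card (NoRunWords 0 h n) = 0 := by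
  have : IsEmpty (NoRunWords 0 h n) := by
    refine ⟨fun w => ?_⟩
    rcases w with ⟨w, hw, -⟩
    match w, hw with
    | x :: _, _ => exact x.elim0
    | [], hw => simp at hw; omega
  exact Nat.card_of_isEmpty

def consEquiv (n : ℕ) : Fin r × NoRunWords r h n ≃ TailWords r h (n + 1) where
  toFun p := ⟨p.1 :: p.2.1, by simp [p.2.2.1], by simpa using p.2.2.2⟩
  invFun w := (w.1.head (by intro h0; have := w.2.1; rw [h0] at this; simp at this),
    ⟨w.1.tail, by simp [w.2.1], w.2.2⟩)
  left_inv p := by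
    ext <;> simp
  right_inv w := Subtype.ext (List.cons_head_tail _)

def goodEquiv (n : ℕ) :
    {x : TailWords r h n // ∀ a, ¬ List.replicate h a <:+: x.1} ≃ NoRunWords r h n where
  toFun x := ⟨x.1.1, x.1.2.1, x.2⟩
  invFun w := ⟨⟨w.1, w.2.1, fun b hb => w.2.2 b (hb.trans (List.tail_suffix w.1).isInfix)⟩, w.2.2⟩
  left_inv x := Subtype.ext (Subtype.ext rfl)
  right_inv w := Subtype.ext rfl

def badEquiv (n : ℕ) :
    {x : TailWords r h n // ¬ ∀ a, ¬ List.replicate h a <:+: x.1} ≃ BadWords r h n where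
  toFun x := ⟨x.1.1, x.1.2.1, x.1.2.2, x.2⟩
  invFun w := ⟨⟨w.1, w.2.1, w.2.2.1⟩, w.2.2.2⟩
  left_inv x := Subtype.ext (Subtype.ext rfl)
  right_inv w := Subtype.ext rfl

lemma step (n : ℕ) :
    r * Nat.card (NoRunWords r h n)
      = Nat.card (NoRunWords r h (n + 1)) + Nat.card (BadWords r h (n + 1)) := by
  classical
  simp only [Nat.card_eq_fintype_card]
  have h1 : Fintype.card (TailWords r h (n + 1)) = r * Fintype.card (NoRunWords r h n) := by
    rw [← Fintype.card_congr (consEquiv r n), Fintype.card_prod, Fintype.card_fin]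
  have h2 : Fintype.card (TailWords r h (n + 1))
      = Fintype.card (NoRunWords r h (n + 1)) + Fintype.card (BadWords r h (n + 1)) := by
    rw [← Fintype.card_congr
        (Equiv.sumCompl (fun x : TailWords r h (n+1) => ∀ a, ¬ List.replicate h a <:+: x.1)),
      Fintype.card_sum, Fintype.card_congr (goodEquiv r (n+1)),
      Fintype.card_congr (badEquiv r (n+1))]
  rw [← h1, h2]

lemma cardB_small (n : ℕ) (hn : n < h) : Nat.card (BadWords r h n) = 0 := by
  have : IsEmpty (BadWords r h n) := by
    refine ⟨fun w => ?_⟩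
    obtain ⟨w, hlen, -, hbad⟩ := w
    push_neg at hbad
    obtain ⟨a, hinf⟩ := hbad
    have := hinf.sublist.length_le
    simp only [List.length_replicate] at this
    omega
  exact Nat.card_of_isEmpty

end Count

section Count2

variable {α : Type*} (r : ℕ) {h : ℕ}

lemma replicate_append_tail (hh : 2 ≤ h) (a : α) (t : List α) :
    (List.replicate h a ++ t).tail = List.replicate (h - 1) a ++ t := by
  have e : List.replicate h a = a :: List.replicate (h - 1) a := by
    rw [← List.replicate_succ]; congr 1; omega
  rw [e]; rfl

def badFun (hh : 2 ≤ h) (n : ℕ) (hn : h ≤ n)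
    (x : {p : Fin r × NoRunWords r h (n - h) // ∀ b ∈ p.2.1.head?, b ≠ p.1}) :
    BadWords r h n :=
  ⟨List.replicate h x.1.1 ++ x.1.2.1,
   by have := x.1.2.2.1; simp [this]; omega,
   by rw [replicate_append_tail hh]
      exact key_no_run (h - 1) (by omega) _ _ x.1.2.2.2 x.2,
   fun hall => hall x.1.1 ⟨[], x.1.2.1, by simp⟩⟩

lemma badFun_bij (hh : 2 ≤ h) (n : ℕ) (hn : h ≤ n) :
    Function.Bijective (badFun r hh n hn) := by
  constructor
  · rintro ⟨⟨a, t, ht, htn⟩, hx⟩ ⟨⟨a', t', ht', htn'⟩, hx'⟩ hEq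
    have hval : List.replicate h a ++ t = List.replicate h a' ++ t' :=
      congrArg Subtype.val hEq
    obtain ⟨h1, h2⟩ := List.append_inj hval (by simp)
    have e1 : List.replicate h a = a :: List.replicate (h - 1) a := by
      rw [← List.replicate_succ]; congr 1; omega
    have e2 : List.replicate h a' = a' :: List.replicate (h - 1) a' := by
      rw [← List.replicate_succ]; congr 1; omega
    rw [e1, e2] at h1
    simp only [List.cons.injEq] at h1
    apply Subtype.ext
    apply Prod.ext
    · exact h1.1
    · exact Subtype.ext h2
  · rintro ⟨w, hlen, htail, hbad⟩
    push_neg at hbad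
    obtain ⟨a, p, s, hps⟩ := hbad
    have hp : p = [] := by
      by_contra hpne
      obtain ⟨c, p', rfl⟩ := List.exists_cons_of_ne_nil hpne
      exact htail a ⟨p', s, by rw [← hps]; rfl⟩
    subst hp
    simp only [List.nil_append] at hps
    have hslen : s.length = n - h := by
      have := congrArg List.length hps
      simp only [List.length_append, List.length_replicate, hlen] at this
      omega
    have hsno : ∀ b, ¬ List.replicate h b <:+: s := by
      intro b hb
      refine htail b ?_
      rw [← hps, replicate_append_tail hh]
      exact hb.trans ⟨List.replicate (h - 1) a, [], by simp⟩
    have hhd : ∀ b ∈ s.head?, b ≠ a := by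
      intro b hbmem
      cases s with
      | nil => simp at hbmem
      | cons c s' =>
        simp only [List.head?_cons, Option.mem_some_iff] at hbmem
        intro hba
        have hca : c = a := by rw [hbmem, hba]
        refine htail a ⟨[], s', ?_⟩
        rw [← hps, replicate_append_tail hh, hca]
        simp only [List.nil_append]
        rw [show List.replicate h a = List.replicate (h - 1) a ++ [a] by
          rw [← List.replicate_succ']; congr 1; omega]
        simp
    exact ⟨⟨(a, ⟨s, hslen, hsno⟩), hhd⟩, Subtype.ext hps⟩

noncomputable def badEquiv2 (hh : 2 ≤ h) (n : ℕ) (hn : h ≤ n) :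
    {p : Fin r × NoRunWords r h (n - h) // ∀ b ∈ p.2.1.head?, b ≠ p.1} ≃ BadWords r h n :=
  Equiv.ofBijective _ (badFun_bij r hh n hn)

lemma cardB_h (hh : 2 ≤ h) : Nat.card (BadWords r h h) = r := by
  classical
  rw [← Nat.card_congr (badEquiv2 r hh h le_rfl)]
  have he : ∀ p : Fin r × NoRunWords r h (h - h), ∀ b ∈ p.2.1.head?, b ≠ p.1 := by
    intro p b hb
    have hnil : p.2.1 = [] := List.length_eq_zero_iff.mp (by rw [p.2.2.1]; omega)
    rw [hnil] at hb
    simp at hb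
  rw [Nat.card_congr (Equiv.subtypeUnivEquiv he), Nat.card_eq_fintype_card,
    Fintype.card_prod, Fintype.card_fin, ← Nat.card_eq_fintype_card]
  have : h - h = 0 := Nat.sub_self h
  rw [this, cardS0 r hh, mul_one]

def badSigmaEquiv (n : ℕ) :
    {p : Fin r × NoRunWords r h (n - h) // ∀ b ∈ p.2.1.head?, b ≠ p.1}
      ≃ Σ t : NoRunWords r h (n - h), {a : Fin r // ∀ b ∈ t.1.head?, b ≠ a} where
  toFun x := ⟨x.1.2, ⟨x.1.1, x.2⟩⟩
  invFun y := ⟨(y.2.1, y.1), y.2.2⟩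
  left_inv x := rfl
  right_inv y := rfl

lemma cardB_big (hh : 2 ≤ h) (n : ℕ) (hn : h < n) :
    Nat.card (BadWords r h n) = Nat.card (NoRunWords r h (n - h)) * (r - 1) := by
  classical
  rw [← Nat.card_congr (badEquiv2 r hh n hn.le), Nat.card_congr (badSigmaEquiv r n),
    Nat.card_eq_fintype_card, Fintype.card_sigma]
  have hcard : ∀ t : NoRunWords r h (n - h),
      Fintype.card {a : Fin r // ∀ b ∈ t.1.head?, b ≠ a} = r - 1 := by
    intro t
    have hne : t.1 ≠ [] := by
      intro h0
      have := t.2.1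
      rw [h0] at this
      simp at this
      omega
    rw [Fintype.card_congr (Equiv.subtypeEquivRight (q := fun a => ¬ (t.1.head hne = a))
      (fun a => by rw [List.head?_eq_head hne]; simp))]
    rw [Fintype.card_subtype_compl, Fintype.card_subtype_eq', Fintype.card_fin]
  rw [Finset.sum_congr rfl (fun t _ => hcard t), Finset.sum_const, smul_eq_mul,
    Finset.card_univ, Nat.card_eq_fintype_card]

end Count2

section Recur

variable (r : ℕ) {h : ℕ}

lemma rec_small (hh : 2 ≤ h) {n : ℕ} (h1 : 1 ≤ n) (h2 : n < h) :
    Nat.card (NoRunWords r h n) = r * Nat.card (NoRunWords r h (n - 1)) := by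
  obtain ⟨m, rfl⟩ : ∃ m, n = m + 1 := ⟨n - 1, by omega⟩
  have hs := step r (h := h) m
  rw [cardB_small r (m + 1) h2] at hs
  simpa using hs.symm

lemma rec_h (hh : 2 ≤ h) :
    Nat.card (NoRunWords r h h) + r = r * Nat.card (NoRunWords r h (h - 1)) := by
  have hs := step r (h := h) (h - 1)
  rw [show h - 1 + 1 = h by omega, cardB_h r hh] at hs
  omega

lemma rec_big (hh : 2 ≤ h) {n : ℕ} (h2 : h < n) :
    Nat.card (NoRunWords r h n) + Nat.card (NoRunWords r h (n - h)) * (r - 1)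
      = r * Nat.card (NoRunWords r h (n - 1)) := by
  obtain ⟨m, rfl⟩ : ∃ m, n = m + 1 := ⟨n - 1, by omega⟩
  have hs := step r (h := h) m
  rw [cardB_big r hh (m + 1) h2] at hs
  simp only [Nat.add_sub_cancel]
  omega

end Recur


/-- The ordinary generating function of words of length `n` over an `r`-letter
alphabet with no `h` consecutive equal letters is
`1/(1 - ∑_{i=1}^r (z - z^h)/(1 - z^h)) = (1 - z^h)/(1 - r z + (r-1) z^h)`. -/
theorem no_h_run_words_generating_function (r h : ℕ) (hh : 2 ≤ h)
    (c : ℕ → ℕ)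
    (hc : ∀ n, c n = Nat.card
        {w : List (Fin r) // w.length = n ∧ ∀ a, ¬ List.replicate h a <:+: w}) :
    (PowerSeries.mk fun n => (c n : ℚ))
        * (1 - PowerSeries.C (r : ℚ) * PowerSeries.X
            + PowerSeries.C ((r : ℚ) - 1) * PowerSeries.X ^ h)
      = 1 - PowerSeries.X ^ h ∧
    (PowerSeries.mk fun n => (c n : ℚ))
      = (1 - (∑ _i : Fin r, (PowerSeries.X - PowerSeries.X ^ h)
              * PowerSeries.invOfUnit (1 - PowerSeries.X ^ h) 1))⁻¹ := by
  have hcn : ∀ n, c n = Nat.card (NoRunWords r h n) := hc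
  have hc0 : c 0 = 1 := by rw [hcn, cardS0 r hh]
  have key : ∀ n : ℕ, (c n : ℚ) - (r : ℚ) * (if 1 ≤ n then (c (n - 1) : ℚ) else 0)
      + ((r : ℚ) - 1) * (if h ≤ n then (c (n - h) : ℚ) else 0)
      = (if n = 0 then 1 else 0) - (if n = h then 1 else 0) := by
    intro n
    rcases Nat.eq_zero_or_pos n with rfl | hn1
    · rw [if_neg (by omega), if_neg (by omega), if_pos rfl, if_neg (by omega), hc0]
      simp
    rcases lt_trichotomy n h with hlt | heq | hgt
    · rw [if_pos (by omega : 1 ≤ n), if_neg (by omega), if_neg (by omega),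
        if_neg (by omega)]
      have := rec_small r hh hn1 hlt
      rw [← hcn, ← hcn] at this
      push_cast [this]
      ring
    · subst heq
      rw [if_pos (by omega : 1 ≤ n), if_pos le_rfl, if_neg (by omega), if_pos rfl,
        Nat.sub_self, hc0]
      have := rec_h r hh
      rw [← hcn, ← hcn] at this
      have hq : (c n : ℚ) + r = r * (c (n - 1) : ℚ) := by exact_mod_cast this
      push_cast
      linarith
    · rw [if_pos (by omega : 1 ≤ n), if_pos (by omega : h ≤ n), if_neg (by omega),
        if_neg (by omega)]
      rcases Nat.eq_zero_or_pos r with rfl | hr1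
      · have hz : ∀ m, 1 ≤ m → (c m : ℚ) = 0 := by
          intro m hm
          rw [hcn, cardS_zero_alphabet m hm]
          simp
        rw [hz n (by omega), hz (n - 1) (by omega), hz (n - h) (by omega)]
        ring
      · have := rec_big r hh hgt
        rw [← hcn, ← hcn, ← hcn] at this
        have hq : (c n : ℚ) + (c (n - h) : ℚ) * ((r : ℚ) - 1)
            = r * (c (n - 1) : ℚ) := by
          have := congrArg (fun k : ℕ => (k : ℚ)) this
          push_cast [Nat.cast_sub hr1] at this
          linarith [this]
        linarith
  have part1 : (PowerSeries.mk fun n => (c n : ℚ))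
      * (1 - PowerSeries.C (r : ℚ) * PowerSeries.X
          + PowerSeries.C ((r : ℚ) - 1) * PowerSeries.X ^ h)
      = 1 - PowerSeries.X ^ h := by
    obtain ⟨q, hq⟩ : ∃ q : ℚ, q = (r : ℚ) - 1 := ⟨_, rfl⟩
    rw [← hq]
    ext n
    have expand : (PowerSeries.mk fun n => (c n : ℚ))
        * (1 - PowerSeries.C (r : ℚ) * PowerSeries.X
            + PowerSeries.C q * PowerSeries.X ^ h)
        = (PowerSeries.mk fun n => (c n : ℚ))
          - PowerSeries.C (r : ℚ) * ((PowerSeries.mk fun n => (c n : ℚ)) * PowerSeries.X ^ 1)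
          + PowerSeries.C q
            * ((PowerSeries.mk fun n => (c n : ℚ)) * PowerSeries.X ^ h) := by
      ring
    rw [expand]
    simp only [map_add, map_sub, coeff_C_mul, coeff_mul_X_pow', coeff_mk, coeff_one,
      coeff_X_pow]
    rw [hq]
    exact key n
  refine ⟨part1, ?_⟩
  have hDconst : constantCoeff (R := ℚ) (1 - X ^ h : ℚ⟦X⟧) = 1 := by
    rw [map_sub, map_one, map_pow, constantCoeff_X, zero_pow (by omega : h ≠ 0), sub_zero]
  have hiD : ((1 - X ^ h : ℚ⟦X⟧)) * invOfUnit (1 - X ^ h) 1 = 1 :=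
    mul_invOfUnit _ 1 (by rw [hDconst]; rfl)
  have hsum : (∑ _i : Fin r, (X - X ^ h) * invOfUnit (1 - X ^ h) 1 : ℚ⟦X⟧)
      = PowerSeries.C (r : ℚ) * ((X - X ^ h) * invOfUnit (1 - X ^ h) 1) := by
    rw [Finset.sum_const, Finset.card_univ, Fintype.card_fin, nsmul_eq_mul,
      ← map_natCast (PowerSeries.C (R := ℚ)) r]
  have hmain : (PowerSeries.mk fun n => (c n : ℚ))
      * (1 - ∑ _i : Fin r, (X - X ^ h) * invOfUnit (1 - X ^ h) 1) = 1 := by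
    rw [hsum]
    have hfact : (1 : ℚ⟦X⟧) - PowerSeries.C (r : ℚ) * ((X - X ^ h) * invOfUnit (1 - X ^ h) 1)
        = (1 - PowerSeries.C (r : ℚ) * X + PowerSeries.C ((r : ℚ) - 1) * X ^ h)
          * invOfUnit (1 - X ^ h) 1 := by
      have hA : (1 - PowerSeries.C (r : ℚ) * X + PowerSeries.C ((r : ℚ) - 1) * X ^ h : ℚ⟦X⟧)
          = (1 - X ^ h) - PowerSeries.C (r : ℚ) * (X - X ^ h) := by
        rw [map_sub, map_one]; ring
      rw [hA]
      linear_combination -hiD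
    rw [hfact, ← mul_assoc, part1, hiD]
  have hconst : constantCoeff (R := ℚ)
      (1 - ∑ _i : Fin r, (X - X ^ h) * invOfUnit (1 - X ^ h) 1 : ℚ⟦X⟧) ≠ 0 := by
    intro h0
    have := congrArg (constantCoeff (R := ℚ)) hmain
    rw [map_mul, h0, mul_zero] at this
    exact zero_ne_one this
  exact (PowerSeries.eq_inv_iff_mul_eq_one hconst).mpr hmain
end
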